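/- arXiv:2307.04652 — 2 statements merged into one kernel-verified Lean document; each statement's English description precedes it below -/
import Mathlib

section
/- Let n = 2k+1 be odd, let r satisfy 2 + 1/k ≤ r < 4, and let c be a circular r-coloring of the all-negative cycle (C_n, −). Then the winding number of the shortest-arc extension of c on the exact square C_n^{#2} is odd. -/
open scoped Classical

/-- The representative in `[0, r)` of a point of the circle `O_r` (of circumference `r`),
i.e. the clockwise arc length from the base point `0`. -/
noncomputable def dlift (r : ℝ) (hr : 0 < r) (x : AddCircle r) : ℝ :=
  haveI : Fact (0 < r) := ⟨hr⟩
  ((AddCircle.equivIco r 0 x : Set.Ico (0 : ℝ) (0 + r)) : ℝ)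

/-- The representative in `(-r/2, r/2]` of a point of the circle `O_r`: the signed length of
the shortest arc from the base point (positive = clockwise). -/
noncomputable def slift (r : ℝ) (hr : 0 < r) (x : AddCircle r) : ℝ :=
  haveI : Fact (0 < r) := ⟨hr⟩
  ((AddCircle.equivIoc r (-(r / 2)) x : Set.Ioc (-(r / 2)) (-(r / 2) + r)) : ℝ)

/-- A mapping `c` of the vertices of the cycle `C_n` to the circle `O_r` is far-polar if for
each `i` the points `c (i-1)` and `c (i+1)` partition `O_r` into two arcs of unequal lengths
and `c i` lies strictly inside the larger arc.  Here `dlift r hr (c (i+1) - c (i-1))` is the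
length of the clockwise arc from `c (i-1)` to `c (i+1)`. -/
def FarPolarCycle (n : ℕ) (r : ℝ) (hr : 0 < r) (c : ZMod n → AddCircle r) : Prop :=
  ∀ i : ZMod n,
    dlift r hr (c (i + 1) - c (i - 1)) ≠ r / 2 ∧
    (if r / 2 < dlift r hr (c (i + 1) - c (i - 1)) then
      0 < dlift r hr (c i - c (i - 1)) ∧
        dlift r hr (c i - c (i - 1)) < dlift r hr (c (i + 1) - c (i - 1))
    else
      dlift r hr (c (i + 1) - c (i - 1)) < dlift r hr (c i - c (i - 1)))

section Aux
variable {r : ℝ}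

lemma coe_add_period (r x : ℝ) : ((x + r : ℝ) : AddCircle r) = ((x : ℝ) : AddCircle r) := by
  rw [QuotientAddGroup.eq_iff_sub_mem]
  simpa using AddSubgroup.mem_zmultiples r

lemma coe_sub_period (r x : ℝ) : ((x - r : ℝ) : AddCircle r) = ((x : ℝ) : AddCircle r) := by
  rw [QuotientAddGroup.eq_iff_sub_mem]
  simpa using AddSubgroup.neg_mem _ (AddSubgroup.mem_zmultiples r)

lemma slift_mem (hr : 0 < r) (x : AddCircle r) : slift r hr x ∈ Set.Ioc (-(r/2)) (r/2) := by
  haveI : Fact (0 < r) := ⟨hr⟩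
  have h := (AddCircle.equivIoc r (-(r/2)) x).2
  unfold slift
  exact ⟨h.1, by have := h.2; linarith⟩

lemma slift_eq_of_mem (hr : 0 < r) {y : ℝ} (hy : y ∈ Set.Ioc (-(r/2)) (r/2)) :
    slift r hr ((y : ℝ) : AddCircle r) = y := by
  haveI : Fact (0 < r) := ⟨hr⟩
  unfold slift
  rw [AddCircle.equivIoc]
  simp only [QuotientAddGroup.equivIocMod_coe]
  exact (toIocMod_eq_self hr).mpr (by rwa [show -(r/2) + r = r/2 by ring])

lemma slift_coe (hr : 0 < r) (x : AddCircle r) : ((slift r hr x : ℝ) : AddCircle r) = x := by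
  haveI : Fact (0 < r) := ⟨hr⟩
  exact (AddCircle.equivIoc r (-(r/2))).symm_apply_apply x

lemma norm_coe_eq (hr : 0 < r) {y : ℝ} (hy : y ∈ Set.Ioc (-(r/2)) (r/2)) :
    ‖((y : ℝ) : AddCircle r)‖ = |y| := by
  rw [AddCircle.norm_eq]
  rcases eq_or_lt_of_le hy.2 with h | h
  · subst h
    have h1 : round (r⁻¹ * (r/2)) = 1 := by
      have hr : 0 < r := by
        by_contra hc
        push_neg at hc
        have := hy.1; nlinarith
      rw [round_eq, show r⁻¹ * (r/2) + 1/2 = 1 by field_simp; norm_num]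
      norm_num
    rw [h1]
    have hr : 0 < r := by
      by_contra hc; push_neg at hc; have := hy.1; nlinarith
    rw [abs_of_nonpos (by push_cast; linarith), abs_of_nonneg (by linarith)]
    push_cast; ring
  · have hr : 0 < r := by
      by_contra hc; push_neg at hc
      rcases hy.1, h with ⟨h1, h2⟩; nlinarith
    have : round (r⁻¹ * y) = 0 := by
      rw [round_eq, Int.floor_eq_zero_iff]
      constructor
      · have := hy.1
        have h1 : -(1/2 : ℝ) < r⁻¹ * y := by
          rw [neg_lt, ← mul_neg]
          calc r⁻¹ * -y < r⁻¹ * (r/2) := by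
                apply mul_lt_mul_of_pos_left _ (inv_pos.mpr hr); linarith
            _ = 1/2 := by field_simp
        linarith
      · have h1 : r⁻¹ * y < 1/2 := by
          calc r⁻¹ * y < r⁻¹ * (r/2) := by
                apply mul_lt_mul_of_pos_left h (inv_pos.mpr hr)
            _ = 1/2 := by field_simp
        linarith
    rw [this]; norm_num

/-- Key arithmetic lemma: adding two short arcs, with wrap correction. -/
lemma slift_add (hr : 0 < r) (hr4 : r < 4) {a b : ℝ}
    (ha : a ∈ Set.Ioc (-(r/2)) (r/2)) (hb : b ∈ Set.Ioc (-(r/2)) (r/2))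
    (ha1 : 1 ≤ |a|) (hb1 : 1 ≤ |b|) :
    slift r hr (((a + b : ℝ)) : AddCircle r) =
      a + b - (if 0 < a then (if 0 < b then r else 0) else (if 0 < b then 0 else -r)) := by
  obtain ⟨ha1l, ha1r⟩ := ha
  obtain ⟨hb1l, hb1r⟩ := hb
  have hA : a ≤ -1 ∨ 1 ≤ a := by rcases le_abs.mp ha1 with h | h; exacts [Or.inr h, Or.inl (by linarith)]
  have hB : b ≤ -1 ∨ 1 ≤ b := by rcases le_abs.mp hb1 with h | h; exacts [Or.inr h, Or.inl (by linarith)]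
  rcases hA with hA | hA <;> rcases hB with hB | hB
  · -- both negative: wrap -r
    rw [if_neg (by linarith), if_neg (by linarith)]
    have hcoe : (((a + b : ℝ)) : AddCircle r) = (((a + b + r : ℝ)) : AddCircle r) := by
      rw [show (a + b + r : ℝ) = (a+b) + r by ring, coe_add_period]
    rw [hcoe, slift_eq_of_mem hr ⟨by linarith, by linarith⟩]
    ring
  · -- a neg, b pos
    rw [if_neg (by linarith), if_pos (by linarith)]
    rw [slift_eq_of_mem hr ⟨by linarith, by linarith⟩]
    ring
  · -- a pos, b neg
    rw [if_pos (by linarith), if_neg (by linarith)]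
    rw [slift_eq_of_mem hr ⟨by linarith, by linarith⟩]
    ring
  · -- both positive: wrap r
    rw [if_pos (by linarith), if_pos (by linarith)]
    have hcoe : (((a + b : ℝ)) : AddCircle r) = (((a + b - r : ℝ)) : AddCircle r) := by
      rw [show (a + b - r : ℝ) = (a+b) - r by ring, coe_sub_period]
    rw [hcoe, slift_eq_of_mem hr ⟨by linarith, by linarith⟩]

end Aux

lemma sum_range_zmod {M : Type*} [AddCommMonoid M] (n : ℕ) [NeZero n] (g : ZMod n → M) :
    ∑ j ∈ Finset.range n, g ((j : ℕ) : ZMod n) = ∑ i : ZMod n, g i := by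
  rw [← Fin.sum_univ_eq_sum_range (fun j => g ((j : ℕ) : ZMod n)) n]
  apply Fintype.sum_bijective (fun i : Fin n => ((i : ℕ) : ZMod n))
  · rw [Fintype.bijective_iff_injective_and_card]
    refine ⟨fun x y hxy => ?_, by simp [ZMod.card]⟩
    have := congrArg ZMod.val hxy
    rwa [ZMod.val_cast_of_lt x.2, ZMod.val_cast_of_lt y.2, ← Fin.ext_iff] at this
  · intro i; rfl

lemma two_mul_bij (k : ℕ) : Function.Bijective (fun i : ZMod (2*k+1) => 2 * i) := by
  have h2 : (2 : ZMod (2*k+1)) * ((k : ZMod (2*k+1)) + 1) = 1 := by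
    have h := ZMod.natCast_self (2*k+1)
    push_cast at h
    linear_combination h
  have cancel : ∀ x : ZMod (2*k+1), ((k : ZMod (2*k+1)) + 1) * (2 * x) = x := fun x => by
    rw [← mul_assoc, mul_comm ((k : ZMod (2*k+1)) + 1) 2, h2, one_mul]
  constructor
  · intro x y hxy
    rw [← cancel x, ← cancel y]
    simp only at hxy
    rw [hxy]
  · intro y
    exact ⟨((k : ZMod (2*k+1)) + 1) * y, by show 2 * _ = y; rw [← mul_assoc, h2, one_mul]⟩

/-- Let `n = 2k+1` be odd, `2 + 1/k ≤ r < 4`, and let `c` be a circular `r`-coloring of the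
all-negative cycle `(C_n, -)`.  Then the winding number of the shortest-arc extension of `c`
on the exact square `C_n^{#2}` (the cycle visiting `c 0, c 2, c 4, …`), i.e. the integer `z`
with `∑ slift = z * r`, is odd. -/
theorem windingOdd_circColoring_oddCycle (k : ℕ) (hk : 1 ≤ k) (r : ℝ) (hr : 0 < r)
    (hrlow : 2 + 1 / (k : ℝ) ≤ r) (hr4 : r < 4)
    (c : ZMod (2 * k + 1) → AddCircle r)
    (hc : ∀ i : ZMod (2 * k + 1), 1 ≤ dist (c i) (c (i + 1))) :
    ∃ z : ℤ, Odd z ∧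
      (∑ j ∈ Finset.range (2 * k + 1),
          slift r hr
            (c ((2 * j + 2 : ℕ) : ZMod (2 * k + 1)) - c ((2 * j : ℕ) : ZMod (2 * k + 1))))
        = z * r := by
  have hr2 : (2:ℝ) < r := by
    have hk0 : (0:ℝ) < 1/(k:ℝ) := by
      have : (1:ℝ) ≤ (k:ℝ) := by exact_mod_cast hk
      positivity
    linarith
  haveI : NeZero (2 * k + 1) := ⟨by omega⟩
  set s : ZMod (2*k+1) → ℝ := fun i => slift r hr (c (i+1) - c i) with hs
  have hmem : ∀ i, s i ∈ Set.Ioc (-(r/2)) (r/2) := fun i => slift_mem hr _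
  have h1 : ∀ i, 1 ≤ |s i| := by
    intro i
    have h := hc i
    rw [dist_eq_norm] at h
    have heq : ‖c i - c (i+1)‖ = |s i| := by
      rw [show c i - c (i+1) = -(c (i+1) - c i) by abel, norm_neg,
        ← slift_coe hr (c (i+1) - c i)]
      exact norm_coe_eq hr (slift_mem hr _)
    rwa [heq] at h
  set δ : ZMod (2*k+1) → ℤ := fun i =>
    if 0 < s (2*i) then (if 0 < s (2*i+1) then 1 else 0)
    else (if 0 < s (2*i+1) then 0 else -1) with hδ
  have key : ∀ i : ZMod (2*k+1),
      slift r hr (c (2*i+2) - c (2*i)) = s (2*i) + s (2*i+1) - (δ i : ℝ) * r := by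
    intro i
    have hsum : c (2*i+2) - c (2*i) = ((s (2*i) + s (2*i+1) : ℝ) : AddCircle r) := by
      have e1 := slift_coe hr (c (2*i+1) - c (2*i))
      have e2 := slift_coe hr (c (2*i+1+1) - c (2*i+1))
      rw [show ((s (2*i) + s (2*i+1) : ℝ) : AddCircle r)
            = ((s (2*i) : ℝ) : AddCircle r) + ((s (2*i+1) : ℝ) : AddCircle r) from rfl]
      rw [show ((s (2*i) : ℝ) : AddCircle r) = c (2*i+1) - c (2*i) from e1,
        show ((s (2*i+1) : ℝ) : AddCircle r) = c (2*i+1+1) - c (2*i+1) from e2]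
      rw [show (2*i+1+1 : ZMod (2*k+1)) = 2*i+2 by ring]
      abel
    rw [hsum, slift_add hr hr4 (hmem _) (hmem _) (h1 _) (h1 _)]
    simp only [hδ]
    split_ifs <;> push_cast <;> ring
  -- Convert the sum over range to a sum over ZMod (2*k+1)
  have hstep1 : (∑ j ∈ Finset.range (2*k+1),
        slift r hr (c ((2*j+2 : ℕ) : ZMod (2*k+1)) - c ((2*j : ℕ) : ZMod (2*k+1))))
      = ∑ i : ZMod (2*k+1), slift r hr (c (2*i+2) - c (2*i)) := by
    rw [← sum_range_zmod (2*k+1) (fun i : ZMod (2*k+1) => slift r hr (c (2*i+2) - c (2*i)))]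
    apply Finset.sum_congr rfl
    intro j _
    congr 2
    · push_cast; ring
    · push_cast; ring
  set T : ℝ := ∑ i : ZMod (2*k+1), s i with hT
  set E : ℤ := ∑ i : ZMod (2*k+1), δ i with hE
  have hsum2i : (∑ i : ZMod (2*k+1), s (2*i)) = T :=
    Fintype.sum_bijective (fun i : ZMod (2*k+1) => 2*i) (two_mul_bij k) _ _ (fun i => rfl)
  have hsum2i1 : (∑ i : ZMod (2*k+1), s (2*i+1)) = T := by
    have hb : Function.Bijective (fun i : ZMod (2*k+1) => 2*i+1) :=
      (Equiv.addRight (1 : ZMod (2*k+1))).bijective.comp (two_mul_bij k)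
    exact Fintype.sum_bijective _ hb _ _ (fun i => rfl)
  have hstep2 : (∑ i : ZMod (2*k+1), slift r hr (c (2*i+2) - c (2*i)))
      = 2 * T - (E : ℝ) * r := by
    rw [Finset.sum_congr rfl (fun i _ => key i), Finset.sum_sub_distrib,
      Finset.sum_add_distrib, hsum2i, hsum2i1, ← Finset.sum_mul, hE]
    push_cast
    ring
  -- T is an integer multiple of r
  obtain ⟨w, hw⟩ : ∃ w : ℤ, w • r = T := by
    rw [← AddCircle.coe_eq_zero_iff]
    have hcast : ((T : ℝ) : AddCircle r) = ∑ i : ZMod (2*k+1), ((s i : ℝ) : AddCircle r) :=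
      map_sum (QuotientAddGroup.mk' (AddSubgroup.zmultiples r)) s Finset.univ
    rw [hcast]
    have : ∀ i : ZMod (2*k+1), ((s i : ℝ) : AddCircle r) = c (i+1) - c i :=
      fun i => slift_coe hr _
    rw [Finset.sum_congr rfl (fun i _ => this i), Finset.sum_sub_distrib]
    rw [show (∑ i : ZMod (2*k+1), c (i+1)) = ∑ i : ZMod (2*k+1), c i from
      Fintype.sum_bijective _ (Equiv.addRight (1 : ZMod (2*k+1))).bijective _ _ (fun i => rfl)]
    simp
  -- parity of E
  set b : ZMod (2*k+1) → ZMod 2 := fun i => if 0 < s i then 1 else 0 with hb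
  have hδ2 : ∀ i : ZMod (2*k+1), ((δ i : ZMod 2)) = 1 + b (2*i) + b (2*i+1) := by
    intro i
    simp only [hδ, hb]
    split_ifs <;> decide
  have hE2 : ((E : ZMod 2)) = 1 := by
    have h0 : ((E : ZMod 2)) = ∑ i : ZMod (2*k+1), ((δ i : ZMod 2)) := by
      rw [hE]; push_cast; rfl
    rw [h0, Finset.sum_congr rfl (fun i _ => hδ2 i), Finset.sum_add_distrib,
      Finset.sum_add_distrib]
    have hb1 : (∑ i : ZMod (2*k+1), b (2*i)) = ∑ i : ZMod (2*k+1), b i :=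
      Fintype.sum_bijective _ (two_mul_bij k) _ _ (fun i => rfl)
    have hb2 : (∑ i : ZMod (2*k+1), b (2*i+1)) = ∑ i : ZMod (2*k+1), b i :=
      Fintype.sum_bijective _
        ((Equiv.addRight (1 : ZMod (2*k+1))).bijective.comp (two_mul_bij k)) _ _ (fun i => rfl)
    rw [hb1, hb2]
    have hone : (∑ _i : ZMod (2*k+1), (1 : ZMod 2)) = 1 := by
      rw [Finset.sum_const, Finset.card_univ, ZMod.card]
      rw [show (2*k+1) • (1 : ZMod 2) = ((2*k+1 : ℕ) : ZMod 2) by simp]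
      push_cast
      rw [show (2 : ZMod 2) = 0 by decide]
      ring
    rw [hone]
    have hxx : ∀ x : ZMod 2, x + x = 0 := by decide
    rw [add_assoc, hxx]
    ring
  have hEodd : Odd E := by
    rw [← Int.not_even_iff_odd]
    intro hEv
    obtain ⟨m, hm⟩ := hEv
    have h0 := (ZMod.intCast_zmod_eq_zero_iff_dvd E 2).mpr ⟨m, by omega⟩
    rw [hE2] at h0
    exact one_ne_zero h0
  refine ⟨2 * w - E, Even.sub_odd ⟨w, by ring⟩ hEodd, ?_⟩
  rw [hstep1, hstep2, ← hw, zsmul_eq_mul]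
  push_cast
  ring
end

section
/- Let c be a far-polar mapping of the 4-cycle C_4 to O_r. Then the winding number of the directed extension c^D of c on C_4 (following the clockwise orientation along each directed edge) is 2. -/
open scoped Classical

lemma dlift_mem (r : ℝ) (hr : 0 < r) (x : AddCircle r) :
    dlift r hr x ∈ Set.Ico (0:ℝ) r := by
  haveI : Fact (0 < r) := ⟨hr⟩
  have := (AddCircle.equivIco r 0 x).2
  simpa [dlift] using this

lemma dlift_coe (r : ℝ) (hr : 0 < r) (x : AddCircle r) :
    ((dlift r hr x : ℝ) : AddCircle r) = x := by
  haveI : Fact (0 < r) := ⟨hr⟩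
  exact (AddCircle.equivIco r 0).symm_apply_apply x

lemma dlift_add (r : ℝ) (hr : 0 < r) (x y : AddCircle r) :
    dlift r hr (x + y) = dlift r hr x + dlift r hr y ∨
    dlift r hr (x + y) = dlift r hr x + dlift r hr y - r := by
  have hz : ((dlift r hr x + dlift r hr y - dlift r hr (x + y) : ℝ) : AddCircle r) = 0 := by
    rw [AddCircle.coe_sub, AddCircle.coe_add, dlift_coe, dlift_coe, dlift_coe]
    abel
  rw [AddCircle.coe_eq_zero_iff] at hz
  obtain ⟨n, hn⟩ := hz
  have hn' : dlift r hr x + dlift r hr y - dlift r hr (x + y) = (n : ℝ) * r := by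
    rw [← hn, zsmul_eq_mul]
  have hx := dlift_mem r hr x
  have hy := dlift_mem r hr y
  have hxy := dlift_mem r hr (x + y)
  obtain ⟨hx0, hx1⟩ := hx; obtain ⟨hy0, hy1⟩ := hy; obtain ⟨hxy0, hxy1⟩ := hxy
  have hlb : (-1 : ℝ) < (n : ℝ) := by
    rw [← mul_lt_mul_iff_of_pos_right hr]; nlinarith
  have hub : (n : ℝ) < 2 := by
    rw [← mul_lt_mul_iff_of_pos_right hr]; nlinarith
  have hlb' : (-1 : ℤ) < n := by exact_mod_cast hlb
  have hub' : n < 2 := by exact_mod_cast hub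
  interval_cases n
  · left; simp at hn'; linarith
  · right; simp at hn'; linarith

lemma pair_bound (r : ℝ) (hr : 0 < r) (x y : AddCircle r)
    (hne : dlift r hr (x + y) ≠ r / 2)
    (h : if r / 2 < dlift r hr (x + y) then
        0 < dlift r hr y ∧ dlift r hr y < dlift r hr (x + y)
      else dlift r hr (x + y) < dlift r hr y) :
    r / 2 < dlift r hr x + dlift r hr y ∧ dlift r hr x + dlift r hr y < 3 * (r / 2) := by
  have hx := dlift_mem r hr x
  have hy := dlift_mem r hr y
  have hxy := dlift_mem r hr (x + y)
  obtain ⟨hx0, hx1⟩ := hx; obtain ⟨hy0, hy1⟩ := hy; obtain ⟨hxy0, hxy1⟩ := hxy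
  rcases dlift_add r hr x y with hadd | hadd
  · split_ifs at h with hgt
    · constructor <;> linarith
    · exfalso; linarith
  · split_ifs at h with hgt
    · exfalso; linarith [h.1, h.2]
    · have hlt : dlift r hr (x + y) < r / 2 := lt_of_le_of_ne (not_lt.mp hgt) hne
      constructor <;> linarith

/-- Let `c` be a far-polar mapping of the 4-cycle `C_4` to `O_r`.  Then the winding number of
the directed (clockwise) extension `c^D` of `c` is `2`:  the total clockwise arc length
traversed along the directed cycle equals `2 * r`. -/
theorem winding_C4_directed (r : ℝ) (hr : 0 < r)
    (c : ZMod 4 → AddCircle r) (hc : FarPolarCycle 4 r hr c) :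
    (∑ j ∈ Finset.range 4, dlift r hr (c ((j + 1 : ℕ) : ZMod 4) - c ((j : ℕ) : ZMod 4)))
      = 2 * r := by
  set a0 := dlift r hr (c 1 - c 0) with ha0
  set a1 := dlift r hr (c 2 - c 1) with ha1
  set a2 := dlift r hr (c 3 - c 2) with ha2
  set a3 := dlift r hr (c 0 - c 3) with ha3
  have hsum : (∑ j ∈ Finset.range 4, dlift r hr (c ((j + 1 : ℕ) : ZMod 4) - c ((j : ℕ) : ZMod 4)))
      = a0 + a1 + a2 + a3 := by
    rw [Finset.sum_range_succ, Finset.sum_range_succ, Finset.sum_range_succ,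
      Finset.sum_range_one]
    rw [ha0, ha1, ha2, ha3]
    norm_num
    have e4 : (4 : ZMod 4) = 0 := by decide
    rw [e4]
  rw [hsum]
  -- the four far-polar conditions
  have h0 := hc 0
  have h1 := hc 1
  have h2 := hc 2
  have h3 := hc 3
  have z01 : (0 + 1 : ZMod 4) = 1 := by decide
  have z0m : (0 - 1 : ZMod 4) = 3 := by decide
  have z11 : (1 + 1 : ZMod 4) = 2 := by decide
  have z1m : (1 - 1 : ZMod 4) = 0 := by decide
  have z21 : (2 + 1 : ZMod 4) = 3 := by decide
  have z2m : (2 - 1 : ZMod 4) = 1 := by decide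
  have z31 : (3 + 1 : ZMod 4) = 0 := by decide
  have z3m : (3 - 1 : ZMod 4) = 2 := by decide
  rw [z01, z0m] at h0
  rw [z11, z1m] at h1
  rw [z21, z2m] at h2
  rw [z31, z3m] at h3
  have d0 : c 1 - c 3 = (c 1 - c 0) + (c 0 - c 3) := by abel
  have d1 : c 2 - c 0 = (c 2 - c 1) + (c 1 - c 0) := by abel
  have d2 : c 3 - c 1 = (c 3 - c 2) + (c 2 - c 1) := by abel
  have d3 : c 0 - c 2 = (c 0 - c 3) + (c 3 - c 2) := by abel
  rw [d0] at h0; rw [d1] at h1; rw [d2] at h2; rw [d3] at h3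
  have p0 := pair_bound r hr _ _ h0.1 h0.2
  have p1 := pair_bound r hr _ _ h1.1 h1.2
  have p2 := pair_bound r hr _ _ h2.1 h2.2
  have p3 := pair_bound r hr _ _ h3.1 h3.2
  -- the sum is an integer multiple of r
  have hz : ((a0 + a1 + a2 + a3 : ℝ) : AddCircle r) = 0 := by
    rw [AddCircle.coe_add, AddCircle.coe_add, AddCircle.coe_add,
      ha0, ha1, ha2, ha3, dlift_coe, dlift_coe, dlift_coe, dlift_coe]
    abel
  rw [AddCircle.coe_eq_zero_iff] at hz
  obtain ⟨n, hn⟩ := hz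
  have hn' : a0 + a1 + a2 + a3 = (n : ℝ) * r := by rw [← hn, zsmul_eq_mul]
  have hlb : (1 : ℝ) < (n : ℝ) := by
    rw [← mul_lt_mul_iff_of_pos_right hr]; nlinarith [p0.1, p1.1, p2.1, p3.1]
  have hub : (n : ℝ) < 3 := by
    rw [← mul_lt_mul_iff_of_pos_right hr]; nlinarith [p0.2, p1.2, p2.2, p3.2]
  have hlb' : (1 : ℤ) < n := by exact_mod_cast hlb
  have hub' : n < 3 := by exact_mod_cast hub
  have : n = 2 := by omega
  rw [this] at hn'
  push_cast at hn'
  linarith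
end
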